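/- arXiv:2105.04684 — 3 statements merged into one kernel-verified Lean document; each statement's English description precedes it below -/
import Mathlib

section
/- Suppose a linear system with realization (A, [B₁ B₂], [C₁; C₂], [[D₁₁, D₁₂],[D₂₁, D₂₂]]) has D₁₁ invertible, and let Ĥᵢⱼ(z) = Cᵢ(zI−A)⁻¹Bⱼ + Dᵢⱼ be the blocks of its transfer function at a point z where zI − A and zI − (A − B₁D₁₁⁻¹C₁) are invertible and Ĥ₁₁(z) is invertible. Then the partial inverse realization (A − B₁D₁₁⁻¹C₁, [B₁D₁₁⁻¹, B₂ − B₁D₁₁⁻¹D₁₂], [−D₁₁⁻¹C₁; C₂ − D₂₁D₁₁⁻¹C₁], [[D₁₁⁻¹, −D₁₁⁻¹D₁₂],[D₂₁D₁₁⁻¹, D₂₂ − D₂₁D₁₁⁻¹D₁₂]]) has transfer function blocks equal to [[Ĥ₁₁⁻¹, −Ĥ₁₁⁻¹Ĥ₁₂],[Ĥ₂₁Ĥ₁₁⁻¹, Ĥ₂₂ − Ĥ₂₁Ĥ₁₁⁻¹Ĥ₁₂]] evaluated at z. -/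
open Matrix

theorem partial_inverse_realization_transfer_function
    {K : Type*} [Field K] {n m₁ m₂ p₂ : ℕ}
    (A : Matrix (Fin n) (Fin n) K)
    (B₁ : Matrix (Fin n) (Fin m₁) K) (B₂ : Matrix (Fin n) (Fin m₂) K)
    (C₁ : Matrix (Fin m₁) (Fin n) K) (C₂ : Matrix (Fin p₂) (Fin n) K)
    (D₁₁ : Matrix (Fin m₁) (Fin m₁) K) (D₁₂ : Matrix (Fin m₁) (Fin m₂) K)
    (D₂₁ : Matrix (Fin p₂) (Fin m₁) K) (D₂₂ : Matrix (Fin p₂) (Fin m₂) K)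
    (hD : IsUnit D₁₁.det) (z : K)
    (h1 : IsUnit (z • (1 : Matrix (Fin n) (Fin n) K) - A).det)
    (h2 : IsUnit (z • (1 : Matrix (Fin n) (Fin n) K) - (A - B₁ * D₁₁⁻¹ * C₁)).det)
    (H₁₁ : Matrix (Fin m₁) (Fin m₁) K) (H₁₂ : Matrix (Fin m₁) (Fin m₂) K)
    (H₂₁ : Matrix (Fin p₂) (Fin m₁) K) (H₂₂ : Matrix (Fin p₂) (Fin m₂) K)
    (hH11 : H₁₁ = C₁ * (z • (1 : Matrix (Fin n) (Fin n) K) - A)⁻¹ * B₁ + D₁₁)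
    (hH12 : H₁₂ = C₁ * (z • (1 : Matrix (Fin n) (Fin n) K) - A)⁻¹ * B₂ + D₁₂)
    (hH21 : H₂₁ = C₂ * (z • (1 : Matrix (Fin n) (Fin n) K) - A)⁻¹ * B₁ + D₂₁)
    (hH22 : H₂₂ = C₂ * (z • (1 : Matrix (Fin n) (Fin n) K) - A)⁻¹ * B₂ + D₂₂)
    (hHinv : IsUnit H₁₁.det) :
    (-(D₁₁⁻¹ * C₁)) * (z • (1 : Matrix (Fin n) (Fin n) K) - (A - B₁ * D₁₁⁻¹ * C₁))⁻¹ * (B₁ * D₁₁⁻¹)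
        + D₁₁⁻¹ = H₁₁⁻¹
    ∧ (-(D₁₁⁻¹ * C₁)) * (z • (1 : Matrix (Fin n) (Fin n) K) - (A - B₁ * D₁₁⁻¹ * C₁))⁻¹
        * (B₂ - B₁ * D₁₁⁻¹ * D₁₂) + (-(D₁₁⁻¹ * D₁₂)) = -(H₁₁⁻¹ * H₁₂)
    ∧ (C₂ - D₂₁ * D₁₁⁻¹ * C₁) * (z • (1 : Matrix (Fin n) (Fin n) K) - (A - B₁ * D₁₁⁻¹ * C₁))⁻¹
        * (B₁ * D₁₁⁻¹) + D₂₁ * D₁₁⁻¹ = H₂₁ * H₁₁⁻¹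
    ∧ (C₂ - D₂₁ * D₁₁⁻¹ * C₁) * (z • (1 : Matrix (Fin n) (Fin n) K) - (A - B₁ * D₁₁⁻¹ * C₁))⁻¹
        * (B₂ - B₁ * D₁₁⁻¹ * D₁₂) + (D₂₂ - D₂₁ * D₁₁⁻¹ * D₁₂)
        = H₂₂ - H₂₁ * H₁₁⁻¹ * H₁₂ := by
  set M : Matrix (Fin n) (Fin n) K := z • (1 : Matrix (Fin n) (Fin n) K) - A with hMdef
  set N : Matrix (Fin n) (Fin n) K :=
    z • (1 : Matrix (Fin n) (Fin n) K) - (A - B₁ * D₁₁⁻¹ * C₁) with hNdef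
  have hNM : N = M + B₁ * D₁₁⁻¹ * C₁ := by rw [hNdef, hMdef]; abel
  -- cancellation lemmas
  have dE : D₁₁ * D₁₁⁻¹ = 1 := mul_nonsing_inv _ hD
  have dE' : ∀ {k} (x : Matrix (Fin m₁) (Fin k) K), D₁₁ * (D₁₁⁻¹ * x) = x :=
    fun x => mul_nonsing_inv_cancel_left _ _ hD
  have eD : D₁₁⁻¹ * D₁₁ = 1 := nonsing_inv_mul _ hD
  have eD' : ∀ {k} (x : Matrix (Fin m₁) (Fin k) K), D₁₁⁻¹ * (D₁₁ * x) = x :=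
    fun x => nonsing_inv_mul_cancel_left _ _ hD
  have hHH : H₁₁ * H₁₁⁻¹ = 1 := mul_nonsing_inv _ hHinv
  have hHH' : ∀ {k} (x : Matrix (Fin m₁) (Fin k) K), H₁₁ * (H₁₁⁻¹ * x) = x :=
    fun x => mul_nonsing_inv_cancel_left _ _ hHinv
  have hHiH : H₁₁⁻¹ * H₁₁ = 1 := nonsing_inv_mul _ hHinv
  have hHiH' : ∀ {k} (x : Matrix (Fin m₁) (Fin k) K), H₁₁⁻¹ * (H₁₁ * x) = x :=
    fun x => nonsing_inv_mul_cancel_left _ _ hHinv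
  have hMM : M * M⁻¹ = 1 := mul_nonsing_inv _ h1
  have hMM' : ∀ {k} (x : Matrix (Fin n) (Fin k) K), M * (M⁻¹ * x) = x :=
    fun x => mul_nonsing_inv_cancel_left _ _ h1
  have k0 : C₁ * (M⁻¹ * B₁) = H₁₁ - D₁₁ := by
    rw [hH11, ← Matrix.mul_assoc, add_sub_cancel_right]
  have k1 : ∀ {k} (x : Matrix (Fin m₁) (Fin k) K),
      C₁ * (M⁻¹ * (B₁ * x)) = H₁₁ * x - D₁₁ * x := by
    intro k x
    rw [← Matrix.mul_assoc M⁻¹, ← Matrix.mul_assoc C₁, k0, Matrix.sub_mul]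
  have e1 : N⁻¹ = M⁻¹ - M⁻¹ * B₁ * (H₁₁⁻¹ * (C₁ * M⁻¹)) := by
    apply inv_eq_right_inv
    rw [hNM]
    simp only [Matrix.mul_sub, Matrix.sub_mul, Matrix.mul_add, Matrix.add_mul,
      Matrix.mul_assoc, hMM', k1, k0, dE', eD', hHH', hHiH', dE, eD, hHH, hHiH, hMM,
      Matrix.mul_one, Matrix.one_mul]
    abel
  refine ⟨?_, ?_, ?_, ?_⟩ <;>
  · rw [e1]
    first
      | rw [hH12, hH21, hH22]
      | rw [hH12]
      | rw [hH21]
      | skip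
    simp only [Matrix.mul_sub, Matrix.sub_mul, Matrix.mul_add, Matrix.add_mul,
      Matrix.neg_mul, Matrix.mul_neg, Matrix.mul_assoc, k1, k0, dE', eD', hHH', hHiH',
      dE, eD, hHH, hHiH, Matrix.mul_one, Matrix.one_mul]
    abel
end

section
/- The transfer function of the triple momentum realization (A,B,C,D) = ([[1+β,−β],[1,0]], [−α;0], [1+η,−η], 0) equals −α((η+1)z − η)/((z−1)(z−β)) for all z with (z−1)(z−β) ≠ 0. Consequently, it equals −1/(5(z−1)) (the gradient-method transfer function with stepsize 1/5) for all such z if and only if 5α(η+1) = 1 and 5αη = β. -/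
open Matrix

theorem tf_aux_tm (α β η z : ℝ) (hz : (z - 1) * (z - β) ≠ 0) :
    !![1 + η, -η] * (z • (1 : Matrix (Fin 2) (Fin 2) ℝ) - !![1 + β, -β; 1, 0])⁻¹ * !![-α; 0]
      = !![-α * ((η + 1) * z - η) / ((z - 1) * (z - β))] := by
  have h1 : z - 1 ≠ 0 := left_ne_zero_of_mul hz
  have h2 : z - β ≠ 0 := right_ne_zero_of_mul hz
  have hM : z • (1 : Matrix (Fin 2) (Fin 2) ℝ) - !![1 + β, -β; 1, 0]
      = !![z - (1 + β), β; -1, z] := by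
    ext i j; fin_cases i <;> fin_cases j <;> simp [Matrix.one_apply]
  rw [hM]
  have hdet : (!![z - (1 + β), β; -1, z]).det = (z - 1) * (z - β) := by
    simp [Matrix.det_fin_two_of]; ring
  rw [Matrix.inv_def, Matrix.adjugate_fin_two, hdet, Ring.inverse_eq_inv']
  ext i j
  fin_cases i <;> fin_cases j <;>
    simp [Matrix.mul_apply, Fin.sum_univ_succ] <;> field_simp <;> ring

theorem triple_momentum_transfer_function_and_matching
    (α β η : ℝ) :
    (∀ z : ℝ, (z - 1) * (z - β) ≠ 0 →
      !![1 + η, -η] * (z • (1 : Matrix (Fin 2) (Fin 2) ℝ) - !![1 + β, -β; 1, 0])⁻¹ * !![-α; 0]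
        = !![-α * ((η + 1) * z - η) / ((z - 1) * (z - β))])
    ∧ ((∀ z : ℝ, (z - 1) * (z - β) ≠ 0 →
        !![1 + η, -η] * (z • (1 : Matrix (Fin 2) (Fin 2) ℝ) - !![1 + β, -β; 1, 0])⁻¹ * !![-α; 0]
          = !![-1 / (5 * (z - 1))])
      ↔ (5 * α * (η + 1) = 1 ∧ 5 * α * η = β)) := by
  constructor
  · exact fun z hz => tf_aux_tm α β η z hz
  constructor
  · intro h
    have key : ∀ z : ℝ, (z - 1) * (z - β) ≠ 0 →
        5 * α * ((η + 1) * z - η) = z - β := by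
      intro z hz
      have h1 : z - 1 ≠ 0 := left_ne_zero_of_mul hz
      have h2 : z - β ≠ 0 := right_ne_zero_of_mul hz
      have e1 := tf_aux_tm α β η z hz
      have e2 := h z hz
      have e3 : (-α * ((η + 1) * z - η) / ((z - 1) * (z - β)) : ℝ)
          = -1 / (5 * (z - 1)) := by
        have := e1.symm.trans e2
        have := congrFun (congrFun this 0) 0
        simpa using this
      field_simp at e3
      have e4 : (z - 1) * (5 * α * ((η + 1) * z - η)) = (z - 1) * (z - β) := by
        linear_combination (-(z - 1)) * e3
      exact mul_left_cancel₀ h1 e4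
    set M : ℝ := |β| + 2 with hMdef
    have habs1 := abs_nonneg β
    have habs2 := le_abs_self β
    have hβM : β < M := by simp only [hMdef]; linarith
    have h1M : (1:ℝ) < M := by simp only [hMdef]; linarith
    have hz1 : (M - 1) * (M - β) ≠ 0 :=
      mul_ne_zero (sub_ne_zero.2 (ne_of_gt h1M)) (sub_ne_zero.2 (ne_of_gt hβM))
    have hz2 : ((M+1) - 1) * ((M+1) - β) ≠ 0 :=
      mul_ne_zero (sub_ne_zero.2 (by linarith)) (sub_ne_zero.2 (by linarith))
    have k1 := key M hz1
    have k2 := key (M+1) hz2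
    have hc1 : 5 * α * (η + 1) = 1 := by linear_combination k2 - k1
    refine ⟨hc1, ?_⟩
    linear_combination (M + 1) * hc1 - k2
  · rintro ⟨e1, e2⟩ z hz
    have h1 : z - 1 ≠ 0 := left_ne_zero_of_mul hz
    have h2 : z - β ≠ 0 := right_ne_zero_of_mul hz
    rw [tf_aux_tm α β η z hz]
    have h5 : (5:ℝ) * (z - 1) ≠ 0 := mul_ne_zero (by norm_num) h1
    have hent : (-α * ((η + 1) * z - η) / ((z - 1) * (z - β)) : ℝ)
        = -1 / (5 * (z - 1)) := by
      rw [div_eq_div_iff hz h5]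
      linear_combination (-(z-1)*z) * e1 + (z-1) * e2
    rw [hent]
end

section
/- (Cyclic permutation changes the transfer function by a z-shift.) Let (A,[B₁ B₂],[C₁;C₂],D) be a realization with D₁₂ = 0, and let Ĥᵢⱼ(z) = Cᵢ(zI−A)⁻¹Bⱼ + Dᵢⱼ. Then the realization with state matrices Ã = [[A,B₁],[0,0]], B̃ = [[0,B₂],[I,0]], C̃ = [[C₁A, C₁B₁],[C₂, D₂₁]], D̃ = [[D₁₁, C₁B₂],[0, D₂₂]] has transfer function [[Ĥ₁₁(z), zĤ₁₂(z)],[Ĥ₂₁(z)/z, Ĥ₂₂(z)]] at every z ≠ 0 with zI − A invertible. -/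
open Matrix

theorem cyclic_permutation_transfer_function_shift
    {K : Type*} [Field K] {n m₁ m₂ p₁ p₂ : ℕ}
    (A : Matrix (Fin n) (Fin n) K)
    (B₁ : Matrix (Fin n) (Fin m₁) K) (B₂ : Matrix (Fin n) (Fin m₂) K)
    (C₁ : Matrix (Fin p₁) (Fin n) K) (C₂ : Matrix (Fin p₂) (Fin n) K)
    (D₁₁ : Matrix (Fin p₁) (Fin m₁) K) (D₁₂ : Matrix (Fin p₁) (Fin m₂) K)
    (D₂₁ : Matrix (Fin p₂) (Fin m₁) K) (D₂₂ : Matrix (Fin p₂) (Fin m₂) K)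
    (hD12 : D₁₂ = 0)
    (z : K) (hz : z ≠ 0)
    (hA : IsUnit (z • (1 : Matrix (Fin n) (Fin n) K) - A).det) :
    (Matrix.fromBlocks (C₁ * A) (C₁ * B₁) C₂ D₂₁)
        * (z • (1 : Matrix (Fin n ⊕ Fin m₁) (Fin n ⊕ Fin m₁) K)
            - Matrix.fromBlocks A B₁ 0 0)⁻¹
        * (Matrix.fromBlocks 0 B₂ 1 0)
      + Matrix.fromBlocks D₁₁ (C₁ * B₂) 0 D₂₂
      = Matrix.fromBlocks
          (C₁ * (z • (1 : Matrix (Fin n) (Fin n) K) - A)⁻¹ * B₁ + D₁₁)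
          (z • (C₁ * (z • (1 : Matrix (Fin n) (Fin n) K) - A)⁻¹ * B₂ + D₁₂))
          (z⁻¹ • (C₂ * (z • (1 : Matrix (Fin n) (Fin n) K) - A)⁻¹ * B₁ + D₂₁))
          (C₂ * (z • (1 : Matrix (Fin n) (Fin n) K) - A)⁻¹ * B₂ + D₂₂) := by
  set M := z • (1 : Matrix (Fin n) (Fin n) K) - A with hM
  clear_value M
  have hMinv : M * M⁻¹ = 1 := Matrix.mul_nonsing_inv _ hA
  have hdecomp : z • (1 : Matrix (Fin n ⊕ Fin m₁) (Fin n ⊕ Fin m₁) K)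
      - Matrix.fromBlocks A B₁ 0 0
      = Matrix.fromBlocks M (-B₁) 0 (z • 1) := by
    rw [← Matrix.fromBlocks_one, Matrix.fromBlocks_smul, sub_eq_add_neg,
      Matrix.fromBlocks_neg, Matrix.fromBlocks_add]
    rw [Matrix.fromBlocks_inj]
    refine ⟨by rw [hM, sub_eq_add_neg], by simp, by simp, by simp⟩
  have hbig : (z • (1 : Matrix (Fin n ⊕ Fin m₁) (Fin n ⊕ Fin m₁) K)
      - Matrix.fromBlocks A B₁ 0 0)⁻¹
      = Matrix.fromBlocks M⁻¹ (z⁻¹ • (M⁻¹ * B₁)) 0 (z⁻¹ • 1) := by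
    apply Matrix.inv_eq_right_inv
    rw [hdecomp, Matrix.fromBlocks_multiply]
    rw [← Matrix.fromBlocks_one, Matrix.fromBlocks_inj]
    refine ⟨?_, ?_, ?_, ?_⟩
    · simpa using hMinv
    · rw [Matrix.mul_smul, ← Matrix.mul_assoc, hMinv, Matrix.neg_mul,
        Matrix.mul_smul, Matrix.one_mul, Matrix.mul_one]
      simp
    · simp
    · simp [Matrix.smul_mul, smul_smul, mul_inv_cancel₀ hz, inv_mul_cancel₀ hz]
  have hAM : A * M⁻¹ = z • M⁻¹ - 1 := by
    have hA' : A = z • (1 : Matrix (Fin n) (Fin n) K) - M := by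
      rw [hM]; rw [sub_sub_cancel]
    rw [hA', Matrix.sub_mul, Matrix.smul_mul, Matrix.one_mul, hMinv]
  rw [hbig, Matrix.fromBlocks_multiply]
  erw [Matrix.fromBlocks_multiply]
  rw [Matrix.fromBlocks_add]
  have hAMX : ∀ {q : ℕ} (X : Matrix (Fin n) (Fin q) K),
      A * (M⁻¹ * X) = z • (M⁻¹ * X) - X := by
    intro q X
    rw [← Matrix.mul_assoc, hAM, Matrix.sub_mul, Matrix.smul_mul, Matrix.one_mul]
  rw [Matrix.fromBlocks_inj]
  refine ⟨?_, ?_, ?_, ?_⟩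
  · -- block 11
    simp only [Matrix.mul_assoc, Matrix.mul_smul, Matrix.smul_mul, Matrix.mul_one,
      Matrix.mul_zero, Matrix.zero_mul, add_zero, zero_add, Matrix.one_mul, hAMX,
      Matrix.mul_sub, smul_sub, smul_add, smul_smul, inv_mul_cancel₀ hz, one_smul]
    abel
  · -- block 12
    simp only [hD12, add_zero, Matrix.mul_assoc, Matrix.mul_smul, Matrix.smul_mul,
      Matrix.mul_one, Matrix.mul_zero, Matrix.zero_mul, add_zero, zero_add,
      Matrix.one_mul, hAMX, Matrix.mul_sub, smul_sub]
    abel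
  · -- block 21
    simp only [Matrix.mul_assoc, Matrix.mul_smul, Matrix.smul_mul, Matrix.mul_one,
      Matrix.mul_zero, Matrix.zero_mul, add_zero, zero_add, Matrix.one_mul, smul_add]
  · -- block 22
    simp [Matrix.mul_assoc]
end
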